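/- Every orthogonal array OA(2, m, m) can be extended to an orthogonal array OA(2, m+1, m): if F : Fin (m²) → Fin m → S is a function with S a set of m symbols such that for any two distinct columns j₁ ≠ j₂ the map r ↦ (F r j₁, F r j₂) is a bijection from the rows onto S × S, then there exists a column c : Fin (m²) → S such that the extended array (F together with c as an (m+1)-st column) is an OA(2, m+1, m), i.e., for every column j of F the map r ↦ (F r j, c r) is also a bijection onto S × S. -/

import Mathlib

/-- A projective plane: any two distinct points lie on a unique common line, any two distinct
lines meet in a unique point, and there are four points no three of which are collinear. -/
structure IsProjectivePlane {P L : Type} (I : P → L → Prop) : Prop where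
  point_line : ∀ p q : P, p ≠ q → ∃! l : L, I p l ∧ I q l
  line_point : ∀ g h : L, g ≠ h → ∃! p : P, I p g ∧ I p h
  nondeg : ∃ a b c d : P, a ≠ b ∧ a ≠ c ∧ a ≠ d ∧ b ≠ c ∧ b ≠ d ∧ c ≠ d ∧
    (∀ l : L, ¬(I a l ∧ I b l ∧ I c l)) ∧ (∀ l : L, ¬(I a l ∧ I b l ∧ I d l)) ∧
    (∀ l : L, ¬(I a l ∧ I c l ∧ I d l)) ∧ (∀ l : L, ¬(I b l ∧ I c l ∧ I d l))

/-- A projective plane has order `m` if every line is incident with exactly `m + 1` points. -/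
def ProjOrder {P L : Type} (I : P → L → Prop) (m : ℕ) : Prop :=
  ∀ l : L, Nat.card {p : P // I p l} = m + 1

/-- An affine plane: any two distinct points lie on a unique common line, for every
non-incident point–line pair there is a unique line through the point disjoint from the
line, and there exist three non-collinear points. -/
structure IsAffinePlane {P L : Type} (I : P → L → Prop) : Prop where
  point_line : ∀ p q : P, p ≠ q → ∃! l : L, I p l ∧ I q l
  playfair : ∀ (p : P) (l : L), ¬ I p l → ∃! g : L, I p g ∧ ∀ q : P, ¬(I q l ∧ I q g)
  nondeg : ∃ a b c : P, a ≠ b ∧ a ≠ c ∧ b ≠ c ∧ ∀ l : L, ¬(I a l ∧ I b l ∧ I c l)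

/-- An affine plane has order `m` if every line is incident with exactly `m` points. -/
def AffOrder {P L : Type} (I : P → L → Prop) (m : ℕ) : Prop :=
  ∀ l : L, Nat.card {p : P // I p l} = m

/-- Two lines are parallel if they are equal or disjoint. -/
def Parallel {P L : Type} (I : P → L → Prop) (g h : L) : Prop :=
  g = h ∨ ∀ p : P, ¬(I p g ∧ I p h)

/-- A parallel class: an equivalence class of lines under parallelism. -/
def IsParallelClass {P L : Type} (I : P → L → Prop) (Cl : Set L) : Prop :=
  ∃ g : L, Cl = {h : L | Parallel I g h}

/-- The (strength-2) orthogonal array property: for any two distinct columns, the map sending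
a row to its pair of entries in those columns is a bijection onto `S × S`, i.e. each ordered
pair of symbols occurs in exactly one row. -/
def IsOrthArray2 {R Col S : Type} (F : R → Col → S) : Prop :=
  ∀ c₁ c₂ : Col, c₁ ≠ c₂ → Function.Bijective (fun r : R => (F r c₁, F r c₂))

section OAExtAux

open Finset

set_option linter.unusedSectionVars false

variable {m : ℕ} {S : Type} [Fintype S]
variable (F : Fin (m ^ 2) → Fin m → S)

/-- Rows disagree in every column. -/
def OADis (r r' : Fin (m ^ 2)) : Prop := ∀ j, F r j ≠ F r' j

/-- Equal or disagree everywhere. -/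
def OARel (r r' : Fin (m ^ 2)) : Prop := r = r' ∨ OADis F r r'

instance [DecidableEq S] (r r' : Fin (m ^ 2)) : Decidable (OADis F r r') := by
  unfold OADis; infer_instance

instance [DecidableEq S] (r r' : Fin (m ^ 2)) : Decidable (OARel F r r') := by
  unfold OARel; infer_instance

variable (hF : ∀ j₁ j₂ : Fin m, j₁ ≠ j₂ →
      Function.Bijective (fun r : Fin (m ^ 2) => (F r j₁, F r j₂)))

include hF

/-- Two rows agreeing in two distinct columns are equal. -/
theorem OA_pair {j₁ j₂ : Fin m} (hj : j₁ ≠ j₂) {r r' : Fin (m ^ 2)}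
    (h1 : F r j₁ = F r' j₁) (h2 : F r j₂ = F r' j₂) : r = r' :=
  (hF j₁ j₂ hj).1 (Prod.ext h1 h2)

theorem OA_exists {j₁ j₂ : Fin m} (hj : j₁ ≠ j₂) (s t : S) :
    ∃ r, F r j₁ = s ∧ F r j₂ = t := by
  obtain ⟨r, hr⟩ := (hF j₁ j₂ hj).2 (s, t)
  exact ⟨r, congrArg Prod.fst hr, congrArg Prod.snd hr⟩

variable (hScard : Fintype.card S = m)

include hScard

theorem OA_levelCard [DecidableEq S] {j j' : Fin m} (hj : j ≠ j') (s : S) :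
    (univ.filter (fun r => F r j = s)).card = m := by
  conv_rhs => rw [← hScard, ← Finset.card_univ]
  apply Finset.card_bij (fun r _ => F r j')
  · intro a _; exact mem_univ _
  · intro a ha b hb hab
    simp only [mem_filter] at ha hb
    exact OA_pair F hF hj (ha.2.trans hb.2.symm) hab
  · intro t _
    obtain ⟨r, hr1, hr2⟩ := OA_exists F hF hj s t
    exact ⟨r, by simp [hr1], hr2⟩

theorem OA_classCard [DecidableEq S] (hm : 2 ≤ m) (r : Fin (m ^ 2)) :
    (univ.filter (fun r' => OARel F r r')).card = m := by
  have hmm : m ^ 2 = m * m := sq m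
  -- the rows not related to r are the union over columns of agreement sets minus r
  have key : (univ.filter (fun r' => ¬ OARel F r r')).card = m * (m - 1) := by
    have heq : (univ.filter (fun r' => ¬ OARel F r r')) =
        (univ : Finset (Fin m)).biUnion
          (fun j => (univ.filter (fun r' : Fin (m ^ 2) => F r' j = F r j)).erase r) := by
      ext r'
      simp only [mem_filter, mem_univ, true_and, mem_biUnion, mem_erase, OARel, OADis,
        not_or, not_forall, not_not]
      constructor
      · rintro ⟨hne, j, hj⟩
        exact ⟨j, fun h => hne h.symm, hj.symm⟩
      · rintro ⟨j, hne, hj⟩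
        exact ⟨fun h => hne h.symm, j, hj.symm⟩
    rw [heq, Finset.card_biUnion]
    · have hone : ∀ j : Fin m,
          ((univ.filter (fun r' : Fin (m ^ 2) => F r' j = F r j)).erase r).card = m - 1 := by
        intro j
        have hj' : ∃ j' : Fin m, j' ≠ j :=
          Fintype.exists_ne_of_one_lt_card (by simp; omega) j
        obtain ⟨j', hj'⟩ := hj'
        rw [Finset.card_erase_of_mem (by simp), OA_levelCard F hF hScard (Ne.symm hj')]
      simp only [hone, Finset.sum_const, card_univ, Fintype.card_fin, smul_eq_mul]
    · intro j₁ _ j₂ _ hjj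
      simp only [Finset.disjoint_left, mem_erase, mem_filter]
      rintro a ⟨ha, -, h1⟩ ⟨-, -, h2⟩
      exact ha (OA_pair F hF hjj h1 h2)
  have htot := Finset.card_filter_add_card_filter_not
    (s := (univ : Finset (Fin (m ^ 2)))) (p := fun r' => OARel F r r')
  rw [key, Finset.card_univ, Fintype.card_fin] at htot
  have h2 : m * (m - 1) + m = m * m := by
    obtain ⟨n, rfl⟩ : ∃ n, m = n + 1 := ⟨m - 1, by omega⟩
    simp [Nat.add_sub_cancel]
    ring
  omega

/-- Key transitivity lemma. -/
theorem OA_euclid [DecidableEq S] (hm : 2 ≤ m) {r r₁ r₂ : Fin (m ^ 2)}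
    (h1 : OADis F r r₁) (h2 : OADis F r r₂) (hne : r₁ ≠ r₂) : OADis F r₁ r₂ := by
  intro j hj
  set s := F r₁ j with hs
  set L := univ.filter (fun r' : Fin (m ^ 2) => F r' j = s) with hL
  set N := L.filter (fun r' => ∃ j', j' ≠ j ∧ F r' j' = F r j') with hN
  -- N has at least m - 1 elements
  have hφ : ∀ j' : Fin m, j' ≠ j → ∃ r', F r' j = s ∧ F r' j' = F r j' := by
    intro j' hj'
    exact OA_exists F hF (Ne.symm hj') s (F r j')
  choose φ hφ1 hφ2 using hφ
  have hNcard : m - 1 ≤ N.card := by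
    have hcard : ((univ : Finset (Fin m)).erase j).card = m - 1 := by
      rw [Finset.card_erase_of_mem (mem_univ _), card_univ, Fintype.card_fin]
    rw [← hcard]
    apply Finset.card_le_card_of_injOn (fun j' => if h : j' ≠ j then φ j' h else r)
    · intro j' hj'
      have hj'ne : j' ≠ j := (mem_erase.1 hj').1
      simp only [Finset.mem_coe, dif_pos hj'ne, hN, hL, mem_filter, mem_univ, true_and]
      exact ⟨hφ1 j' hj'ne, j', hj'ne, hφ2 j' hj'ne⟩
    · intro a ha b hb hab
      have hane : a ≠ j := (mem_erase.1 (Finset.mem_coe.1 ha)).1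
      have hbne : b ≠ j := (mem_erase.1 (Finset.mem_coe.1 hb)).1
      have hab' : φ a hane = φ b hbne := by
        simpa [dif_pos hane, dif_pos hbne] using hab
      by_contra habne
      -- the common row agrees with r in columns a and b, so equals r;
      -- but its j-entry is s ≠ F r j
      have hreq := OA_pair F hF habne (hφ2 a hane) (hab' ▸ hφ2 b hbne)
      have hrow : F (φ a hane) j = s := hφ1 a hane
      rw [hreq] at hrow
      exact h1 j hrow
  -- but r₁, r₂ are in L \ N which has at most one element
  have hr₁ : r₁ ∈ L \ N := by
    rw [mem_sdiff]
    refine ⟨by simp [hL, hs.symm], fun hmem => ?_⟩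
    rw [hN, mem_filter] at hmem
    obtain ⟨-, j', -, hag⟩ := hmem
    exact h1 j' hag.symm
  have hr₂ : r₂ ∈ L \ N := by
    rw [mem_sdiff]
    refine ⟨by simp [hL, hj.symm], fun hmem => ?_⟩
    rw [hN, mem_filter] at hmem
    obtain ⟨-, j', -, hag⟩ := hmem
    exact h2 j' hag.symm
  have hsub : N ⊆ L := Finset.filter_subset _ _
  have hLcard : L.card = m := by
    obtain ⟨j', hj'⟩ := Fintype.exists_ne_of_one_lt_card (α := Fin m) (by simp; omega) j
    exact OA_levelCard F hF hScard (Ne.symm hj') s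
  have h1card : (L \ N).card ≤ 1 := by
    rw [Finset.card_sdiff_of_subset hsub, hLcard]
    omega
  have : 1 < (L \ N).card := Finset.one_lt_card.2 ⟨r₁, hr₁, r₂, hr₂, hne⟩
  omega

end OAExtAux


open Finset in
/-- Every orthogonal array `OA(2, m, m)` can be extended to an orthogonal
array `OA(2, m+1, m)`: given `F : Fin (m²) → Fin m → S` with `S` a set of `m` symbols such
that for any two distinct columns the pair-of-entries map is a bijection onto `S × S`, there
is a column `c : Fin (m²) → S` such that for every column `j` of `F` the map
`r ↦ (F r j, c r)` is also a bijection onto `S × S`. -/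
theorem orth_array_extension (m : ℕ) (S : Type) (hS : Nat.card S = m)
    (F : Fin (m ^ 2) → Fin m → S)
    (hF : ∀ j₁ j₂ : Fin m, j₁ ≠ j₂ →
      Function.Bijective (fun r : Fin (m ^ 2) => (F r j₁, F r j₂))) :
    ∃ c : Fin (m ^ 2) → S, ∀ j : Fin m,
      Function.Bijective (fun r : Fin (m ^ 2) => (F r j, c r)) := by
  classical
  rcases Nat.lt_or_ge m 2 with hm | hm
  · interval_cases m
    · exact ⟨fun r => absurd r.2 (by simp), fun j => j.elim0⟩
    · -- m = 1
      obtain ⟨hsub, ⟨s⟩⟩ := Nat.card_eq_one_iff_unique.mp hS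
      have hrsub : Subsingleton (Fin (1 ^ 2)) := by
        rw [show (1 : ℕ) ^ 2 = 1 from rfl]; infer_instance
      refine ⟨fun _ => s, fun j => ⟨fun a b _ => Subsingleton.elim a b, fun y => ?_⟩⟩
      exact ⟨⟨0, by norm_num⟩, Subsingleton.elim _ _⟩
  · -- main case
    have hfin : Finite S := Nat.finite_of_card_ne_zero (by omega)
    cases nonempty_fintype S
    have hScard : Fintype.card S = m := by
      rwa [Nat.card_eq_fintype_card] at hS
    -- build the setoid
    have hsymm : ∀ {a b : Fin (m ^ 2)}, OARel F a b → OARel F b a := by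
      rintro a b (rfl | h)
      · exact Or.inl rfl
      · exact Or.inr fun j hj => h j hj.symm
    have htrans : ∀ {a b c : Fin (m ^ 2)}, OARel F a b → OARel F b c → OARel F a c := by
      rintro a b c (rfl | hab) hbc
      · exact hbc
      · rcases hbc with rfl | hbc
        · exact Or.inr hab
        · by_cases hac : a = c
          · exact Or.inl hac
          · exact Or.inr (OA_euclid F hF hScard hm
              (fun j hj => hab j hj.symm) hbc hac)
    let st : Setoid (Fin (m ^ 2)) := ⟨OARel F, fun _ => Or.inl rfl, hsymm, htrans⟩
    haveI : DecidableRel st.r := fun a b => inferInstanceAs (Decidable (OARel F a b))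
    haveI : DecidableEq (Quotient st) := inferInstance
    -- count the classes
    have hfiber : ∀ r : Fin (m ^ 2),
        (univ.filter (fun r' => Quotient.mk st r' = Quotient.mk st r)).card = m := by
      intro r
      have heq : (univ.filter (fun r' => Quotient.mk st r' = Quotient.mk st r)) =
          univ.filter (fun r' => OARel F r r') := by
        apply Finset.filter_congr
        intro r' _
        rw [Quotient.eq (r := st)]
        exact ⟨fun h => hsymm h, fun h => hsymm h⟩
      rw [heq]
      convert OA_classCard F hF hScard hm r using 2
      exact congrArg (fun h => @Finset.filter _ _ h univ) (Subsingleton.elim _ _)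
    have hQcard : Fintype.card (Quotient st) * m = m ^ 2 := by
      have hsum := Finset.card_eq_sum_card_fiberwise
        (s := (univ : Finset (Fin (m ^ 2)))) (t := (univ : Finset (Quotient st)))
        (f := Quotient.mk st) (fun x _ => mem_univ _)
      have hterm : ∀ b : Quotient st,
          (univ.filter (fun a => Quotient.mk st a = b)).card = m :=
        fun b => Quotient.inductionOn b (fun r => hfiber r)
      rw [Finset.card_univ, Fintype.card_fin,
        Finset.sum_congr rfl (fun b _ => hterm b), Finset.sum_const, card_univ,
        smul_eq_mul] at hsum
      exact hsum.symm
    have hQ : Fintype.card (Quotient st) = m :=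
      Nat.eq_of_mul_eq_mul_right (by omega) (hQcard.trans (sq m))
    let g : Quotient st ≃ S := Fintype.equivOfCardEq (hQ.trans hScard.symm)
    refine ⟨fun r => g (Quotient.mk st r), fun j => ?_⟩
    rw [Fintype.bijective_iff_injective_and_card]
    constructor
    · intro a b h
      simp only [Prod.mk.injEq] at h
      obtain ⟨h1, h2⟩ := h
      have hab : OARel F a b := Quotient.eq (r := st) |>.1 (g.injective h2)
      rcases hab with rfl | hd
      · rfl
      · exact absurd h1 (hd j)
    · simp only [Fintype.card_fin, Fintype.card_prod, hScard]
      exact sq m
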